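/- Let E be a real normed vector space, μ a measure on E, ω a measurable subset of E, and let ψ, v : E → ℝ be differentiable functions. Let L ≥ 0 and M ≥ 0 be real numbers such that for all x ∈ ω, |ψ(x)| ≤ 1 and ‖fderiv ℝ ψ x‖ ≤ L. Assume that x ↦ v(x)² and x ↦ ‖fderiv ℝ v x‖² are integrable on ω with respect to μ, and that ∫_ω v(x)² dμ ≤ M² · ∫_ω ‖fderiv ℝ v x‖² dμ. Then (∫_ω ‖fderiv ℝ (ψ·v) x‖² dμ)^{1/2} ≤ (1 + L·M) · (∫_ω ‖fderiv ℝ v x‖² dμ)^{1/2}. (This is the stability estimate ‖∇(ψ_a v)‖ ≤ (1 + C_PF·diam(ω_a)·‖∇ψ_a‖_∞)·‖∇v‖ on vertex patches, stated here for differentiable functions.) -/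

import Mathlib

open MeasureTheory

lemma l2norm_toLp {α : Type*} [MeasurableSpace α] {ν : Measure α} {f : α → ℝ}
    (hf : MemLp f 2 ν) : ‖hf.toLp f‖ = Real.sqrt (∫ x, f x ^ 2 ∂ν) := by
  have h1 : (inner ℝ (hf.toLp f) (hf.toLp f) : ℝ) = ∫ x, f x ^ 2 ∂ν := by
    rw [MeasureTheory.L2.inner_def]
    refine integral_congr_ae ?_
    filter_upwards [hf.coeFn_toLp] with x hx
    simp [hx, RCLike.inner_apply, sq]
  rw [← h1, real_inner_self_eq_norm_sq, Real.sqrt_sq (norm_nonneg _)]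

/-- Stability estimate `‖∇(ψ v)‖ ≤ (1 + L·M)·‖∇v‖` on a patch, for differentiable
functions, given a Poincaré–Friedrichs inequality with constant `M`. -/
theorem stmt_12 {E : Type*} [NormedAddCommGroup E] [NormedSpace ℝ E] [MeasurableSpace E]
    (μ : Measure E) (ω : Set E) (hω : MeasurableSet ω)
    (ψ v : E → ℝ) (hψ : Differentiable ℝ ψ) (hv : Differentiable ℝ v)
    (L M : ℝ) (hL : 0 ≤ L) (hM : 0 ≤ M)
    (hψ1 : ∀ x ∈ ω, |ψ x| ≤ 1) (hψL : ∀ x ∈ ω, ‖fderiv ℝ ψ x‖ ≤ L)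
    (hv2 : IntegrableOn (fun x => v x ^ 2) ω μ)
    (hdv2 : IntegrableOn (fun x => ‖fderiv ℝ v x‖ ^ 2) ω μ)
    (hPF : ∫ x in ω, v x ^ 2 ∂μ ≤ M ^ 2 * ∫ x in ω, ‖fderiv ℝ v x‖ ^ 2 ∂μ) :
    Real.sqrt (∫ x in ω, ‖fderiv ℝ (fun y => ψ y * v y) x‖ ^ 2 ∂μ)
      ≤ (1 + L * M) * Real.sqrt (∫ x in ω, ‖fderiv ℝ v x‖ ^ 2 ∂μ) := by
  set ν := μ.restrict ω with hν
  set a : E → ℝ := fun x => ‖fderiv ℝ v x‖ with ha_def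
  set b : E → ℝ := fun x => L * |v x| with hb_def
  -- measurability
  have hma : AEStronglyMeasurable a ν := by
    have : AEStronglyMeasurable (fun x => Real.sqrt (‖fderiv ℝ v x‖ ^ 2)) ν :=
      (Real.continuous_sqrt.comp_aestronglyMeasurable hdv2.aestronglyMeasurable)
    refine this.congr (Filter.Eventually.of_forall fun x => ?_)
    simp [Real.sqrt_sq (norm_nonneg _), ha_def]
  have hmb : AEStronglyMeasurable b ν := by
    have : AEStronglyMeasurable (fun x => L * Real.sqrt (v x ^ 2)) ν :=
      (Real.continuous_sqrt.comp_aestronglyMeasurable hv2.aestronglyMeasurable).const_mul L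
    refine this.congr (Filter.Eventually.of_forall fun x => ?_)
    simp [Real.sqrt_sq_eq_abs, hb_def]
  have hA : MemLp a 2 ν := by
    rw [memLp_two_iff_integrable_sq hma]; exact hdv2
  have hB : MemLp b 2 ν := by
    rw [memLp_two_iff_integrable_sq hmb]
    have : (fun x => b x ^ 2) = fun x => L ^ 2 * v x ^ 2 := by
      funext x; simp [hb_def, mul_pow, sq_abs]
    rw [this]; exact hv2.const_mul _
  have hAB : MemLp (a + b) 2 ν := hA.add hB
  -- pointwise bound on ω
  have hpt : ∀ x ∈ ω, ‖fderiv ℝ (fun y => ψ y * v y) x‖ ^ 2 ≤ (a x + b x) ^ 2 := by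
    intro x hx
    have hd : fderiv ℝ (fun y => ψ y * v y) x
        = ψ x • fderiv ℝ v x + v x • fderiv ℝ ψ x := fderiv_mul (hψ x) (hv x)
    have h1 : ‖fderiv ℝ (fun y => ψ y * v y) x‖ ≤ a x + b x := by
      rw [hd]
      refine (norm_add_le _ _).trans ?_
      have e1 : ‖ψ x • fderiv ℝ v x‖ ≤ a x := by
        rw [norm_smul]
        calc ‖ψ x‖ * ‖fderiv ℝ v x‖ ≤ 1 * ‖fderiv ℝ v x‖ := by
              exact mul_le_mul_of_nonneg_right (hψ1 x hx) (norm_nonneg _)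
          _ = a x := by simp [ha_def]
      have e2 : ‖v x • fderiv ℝ ψ x‖ ≤ b x := by
        rw [norm_smul, hb_def]
        calc ‖v x‖ * ‖fderiv ℝ ψ x‖ ≤ |v x| * L :=
              mul_le_mul_of_nonneg_left (hψL x hx) (abs_nonneg _)
          _ = L * |v x| := mul_comm _ _
      exact add_le_add e1 e2
    exact pow_le_pow_left₀ (norm_nonneg _) h1 2
  -- integral comparison
  have hmono : ∫ x in ω, ‖fderiv ℝ (fun y => ψ y * v y) x‖ ^ 2 ∂μ
      ≤ ∫ x, (a x + b x) ^ 2 ∂ν := by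
    refine integral_mono_of_nonneg ?_ hAB.integrable_sq ?_
    · exact Filter.Eventually.of_forall fun x => sq_nonneg _
    · rw [Filter.EventuallyLE, ae_restrict_iff' hω]
      exact Filter.Eventually.of_forall fun x hx => hpt x hx
  -- norms
  have hnormA : ‖hA.toLp a‖ = Real.sqrt (∫ x, a x ^ 2 ∂ν) := l2norm_toLp hA
  have hnormB : ‖hB.toLp b‖ = Real.sqrt (∫ x, b x ^ 2 ∂ν) := l2norm_toLp hB
  have hnormAB : ‖hAB.toLp (a + b)‖ = Real.sqrt (∫ x, (a x + b x) ^ 2 ∂ν) := by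
    have := l2norm_toLp hAB; simpa using this
  have hAnn : 0 ≤ ∫ x, a x ^ 2 ∂ν := integral_nonneg fun x => sq_nonneg _
  have key : Real.sqrt (∫ x, (a x + b x) ^ 2 ∂ν)
      ≤ Real.sqrt (∫ x, a x ^ 2 ∂ν) + Real.sqrt (∫ x, b x ^ 2 ∂ν) := by
    rw [← hnormA, ← hnormB, ← hnormAB, MemLp.toLp_add]
    exact norm_add_le _ _
  -- bound on sqrt(∫ b²)
  have hBbound : Real.sqrt (∫ x, b x ^ 2 ∂ν)
      ≤ L * M * Real.sqrt (∫ x, a x ^ 2 ∂ν) := by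
    have e : ∫ x, b x ^ 2 ∂ν = L ^ 2 * ∫ x, v x ^ 2 ∂ν := by
      rw [← integral_const_mul]
      congr 1; funext x; simp [hb_def, mul_pow, sq_abs]
    rw [e]
    have : L ^ 2 * ∫ x, v x ^ 2 ∂ν ≤ (L * M) ^ 2 * ∫ x, a x ^ 2 ∂ν := by
      have := mul_le_mul_of_nonneg_left hPF (sq_nonneg L)
      calc L ^ 2 * ∫ x, v x ^ 2 ∂ν ≤ L ^ 2 * (M ^ 2 * ∫ x in ω, ‖fderiv ℝ v x‖ ^ 2 ∂μ) := this
        _ = (L * M) ^ 2 * ∫ x, a x ^ 2 ∂ν := by rw [hν]; simp only [ha_def]; ring_nf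
    refine (Real.sqrt_le_sqrt this).trans ?_
    rw [Real.sqrt_mul (sq_nonneg _), Real.sqrt_sq (by positivity)]
  calc Real.sqrt (∫ x in ω, ‖fderiv ℝ (fun y => ψ y * v y) x‖ ^ 2 ∂μ)
      ≤ Real.sqrt (∫ x, (a x + b x) ^ 2 ∂ν) := Real.sqrt_le_sqrt hmono
    _ ≤ Real.sqrt (∫ x, a x ^ 2 ∂ν) + Real.sqrt (∫ x, b x ^ 2 ∂ν) := key
    _ ≤ Real.sqrt (∫ x, a x ^ 2 ∂ν) + L * M * Real.sqrt (∫ x, a x ^ 2 ∂ν) :=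
        add_le_add_right hBbound _
    _ = (1 + L * M) * Real.sqrt (∫ x in ω, ‖fderiv ℝ v x‖ ^ 2 ∂μ) := by rw [hν]; ring
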